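/- arXiv:1902.04642 — 2 statements merged into one kernel-verified Lean document; each statement's English description precedes it below -/
import Mathlib

section
/- Every subgroup G of SL(2,ℝ) that contains two noncommuting elements (i.e., every nonabelian subgroup) is contracting: there exist g₁, g₂, … ∈ G such that ‖gₙ‖⁻¹gₙ converges to a rank-one matrix as n → ∞. -/
open Matrix Filter Topology

/-- `SL(2,ℝ)`. -/
abbrev SL2R := Matrix.SpecialLinearGroup (Fin 2) ℝ

attribute [local instance] Matrix.normedAddCommGroup

/-- A submodule of `ℝ²` is a line if it is one-dimensional. -/
def IsLine (ℓ : Submodule ℝ (Fin 2 → ℝ)) : Prop := Module.finrank ℝ ℓ = 1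

/-- The action of a `2 × 2` matrix on lines in `ℝ²` (elements of `ℝP¹`). -/
noncomputable def lineAct (A : Matrix (Fin 2) (Fin 2) ℝ) (ℓ : Submodule ℝ (Fin 2 → ℝ)) :
    Submodule ℝ (Fin 2 → ℝ) :=
  ℓ.map (Matrix.toLin' A)

/-- A subgroup `G ⊆ SL(2,ℝ)` is contracting if there is a sequence `gₙ ∈ G` such that
`‖gₙ‖⁻¹ • gₙ` converges to a rank-one matrix. -/
def IsContracting (G : Subgroup SL2R) : Prop :=
  ∃ g : ℕ → SL2R, (∀ n, g n ∈ G) ∧ ∃ M : Matrix (Fin 2) (Fin 2) ℝ, M.rank = 1 ∧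
    Tendsto (fun n => ‖((g n : SL2R) : Matrix (Fin 2) (Fin 2) ℝ)‖⁻¹ •
      ((g n : SL2R) : Matrix (Fin 2) (Fin 2) ℝ)) atTop (𝓝 M)

/-- A subgroup `G ⊆ SL(2,ℝ)` is type-F if it is contracting and there is no set `Λ ⊆ ℝP¹` of
cardinality one or two invariant under every element of `G`. -/
def IsTypeF (G : Subgroup SL2R) : Prop :=
  IsContracting G ∧
  ¬ ∃ Λ : Set (Submodule ℝ (Fin 2 → ℝ)),
      (∀ ℓ ∈ Λ, IsLine ℓ) ∧ (Λ.ncard = 1 ∨ Λ.ncard = 2) ∧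
      ∀ g ∈ G, lineAct ((g : SL2R) : Matrix (Fin 2) (Fin 2) ℝ) '' Λ = Λ

attribute [local instance] Matrix.normedSpace

private lemma my_CH (A : Matrix (Fin 2) (Fin 2) ℝ) :
    A * A = A.trace • A - A.det • (1 : Matrix (Fin 2) (Fin 2) ℝ) := by
  ext i j
  fin_cases i <;> fin_cases j <;>
    simp [Matrix.mul_apply, Fin.sum_univ_two, Matrix.trace_fin_two, Matrix.det_fin_two,
      Matrix.one_apply] <;> ring

private lemma trace_le_norm (A : Matrix (Fin 2) (Fin 2) ℝ) : A.trace ≤ 2 * ‖A‖ := by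
  have h0 := A.norm_entry_le_entrywise_sup_norm (i := 0) (j := 0)
  have h1 := A.norm_entry_le_entrywise_sup_norm (i := 1) (j := 1)
  rw [Matrix.trace_fin_two]
  have := abs_le.mp (le_trans (le_refl _) h0)
  have := abs_le.mp (le_trans (le_refl _) h1)
  linarith [(abs_le.mp h0).2, (abs_le.mp h1).2, le_abs_self (A 0 0), le_abs_self (A 1 1)]

private lemma entry_le_norm (A : Matrix (Fin 2) (Fin 2) ℝ) (i j : Fin 2) : |A i j| ≤ ‖A‖ :=
  A.norm_entry_le_entrywise_sup_norm

private lemma pow_parabolic (A : Matrix (Fin 2) (Fin 2) ℝ) (hdet : A.det = 1)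
    (htr : A.trace = 2) (n : ℕ) :
    A ^ n = (n : ℝ) • A - ((n : ℝ) - 1) • (1 : Matrix (Fin 2) (Fin 2) ℝ) := by
  induction n with
  | zero => simp
  | succ n ih =>
    have h : A ^ (n + 1) = A ^ n * A := pow_succ A n
    rw [h, ih, sub_mul, smul_mul_assoc, smul_mul_assoc, one_mul, my_CH A, hdet, htr]
    push_cast
    ext i j
    by_cases hij : i = j <;>
      simp [Matrix.sub_apply, Matrix.smul_apply, Matrix.one_apply, hij] <;> ring

private lemma unbounded_parabolic (A : Matrix (Fin 2) (Fin 2) ℝ) (hdet : A.det = 1)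
    (htr : A.trace = 2) (h1 : A ≠ 1) (C : ℝ) : ∃ n : ℕ, C ≤ ‖A ^ n‖ := by
  have hne : ∃ i j, A i j ≠ (1 : Matrix (Fin 2) (Fin 2) ℝ) i j := by
    by_contra h
    push_neg at h
    exact h1 (by ext i j; exact h i j)
  obtain ⟨i, j, hij⟩ := hne
  set d : ℝ := A i j - (1 : Matrix (Fin 2) (Fin 2) ℝ) i j with hd
  have hdne : d ≠ 0 := sub_ne_zero.mpr hij
  have hdpos : 0 < |d| := abs_pos.mpr hdne
  obtain ⟨n, hn⟩ := exists_nat_ge ((C + 1) / |d|)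
  refine ⟨n, ?_⟩
  have hentry : (A ^ n) i j = n * d + (1 : Matrix (Fin 2) (Fin 2) ℝ) i j := by
    rw [pow_parabolic A hdet htr n]
    simp [Matrix.sub_apply, Matrix.smul_apply, hd]
    ring
  have h1ij : |(1 : Matrix (Fin 2) (Fin 2) ℝ) i j| ≤ 1 := by
    by_cases h : i = j <;> simp [Matrix.one_apply, h]
  have : (C + 1) ≤ n * |d| := by
    rw [div_le_iff₀ hdpos] at hn
    linarith
  calc C ≤ n * |d| - 1 := by linarith
    _ ≤ |(n : ℝ) * d| - |(1 : Matrix (Fin 2) (Fin 2) ℝ) i j| := by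
        rw [abs_mul, Nat.abs_cast]; linarith
    _ ≤ |(n : ℝ) * d + (1 : Matrix (Fin 2) (Fin 2) ℝ) i j| := by
        have := abs_add_le ((n : ℝ) * d + (1 : Matrix (Fin 2) (Fin 2) ℝ) i j)
          (-(1 : Matrix (Fin 2) (Fin 2) ℝ) i j)
        simp at this
        rw [abs_mul, Nat.abs_cast]; linarith [abs_neg ((1 : Matrix (Fin 2) (Fin 2) ℝ) i j)]
    _ = |(A ^ n) i j| := by rw [hentry]
    _ ≤ ‖A ^ n‖ := entry_le_norm _ i j

private lemma trace_rec (A : Matrix (Fin 2) (Fin 2) ℝ) (hdet : A.det = 1) (n : ℕ) :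
    (A ^ (n + 2)).trace = A.trace * (A ^ (n + 1)).trace - (A ^ n).trace := by
  have h2 : A ^ (n + 2) = A.trace • A ^ (n + 1) - A ^ n := by
    have h : A ^ (n + 2) = A ^ n * (A * A) := by
      rw [pow_succ, pow_succ, mul_assoc]
    rw [h, my_CH A, hdet, one_smul, mul_sub, mul_one, mul_smul_comm, ← pow_succ]
  rw [h2, Matrix.trace_sub, Matrix.trace_smul, smul_eq_mul]

private lemma trace_pow_ge (A : Matrix (Fin 2) (Fin 2) ℝ) (hdet : A.det = 1)
    (ht : 2 < A.trace) (n : ℕ) :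
    2 + n * (A.trace - 2) ≤ (A ^ n).trace ∧
      (A ^ n).trace + (A.trace - 2) ≤ (A ^ (n + 1)).trace := by
  induction n with
  | zero =>
    refine ⟨by simp [Matrix.trace_one], ?_⟩
    simp [Matrix.trace_one]
  | succ n ih =>
    obtain ⟨h1, h2⟩ := ih
    have hn : (0:ℝ) ≤ (n:ℝ) := Nat.cast_nonneg n
    have hge2 : (2:ℝ) ≤ (A ^ (n+1)).trace := by nlinarith
    constructor
    · push_cast; nlinarith
    · rw [trace_rec A hdet n]
      nlinarith

private lemma unbounded_hyperbolic (A : Matrix (Fin 2) (Fin 2) ℝ) (hdet : A.det = 1)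
    (htr : 2 < A.trace) (C : ℝ) : ∃ n : ℕ, C ≤ ‖A ^ n‖ := by
  obtain ⟨n, hn⟩ := exists_nat_ge ((2 * C - 2) / (A.trace - 2))
  refine ⟨n, ?_⟩
  have hpos : (0:ℝ) < A.trace - 2 := by linarith
  rw [div_le_iff₀ hpos] at hn
  have h1 := (trace_pow_ge A hdet htr n).1
  have h2 := trace_le_norm (A ^ n)
  linarith

private lemma norm_neg_pow (A : Matrix (Fin 2) (Fin 2) ℝ) (n : ℕ) : ‖(-A) ^ n‖ = ‖A ^ n‖ := by
  rcases Nat.even_or_odd n with h | h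
  · rw [h.neg_pow]
  · rw [h.neg_pow, norm_neg]

private lemma unbounded_of_big_trace (A : Matrix (Fin 2) (Fin 2) ℝ) (hdet : A.det = 1)
    (htr : 2 ≤ |A.trace|) (h1 : A ≠ 1) (hm1 : A ≠ -1) (C : ℝ) : ∃ n : ℕ, C ≤ ‖A ^ n‖ := by
  have hdneg : (-A).det = 1 := by rw [Matrix.det_neg]; simp [hdet]
  have htneg : (-A).trace = -A.trace := by simp
  rcases abs_le.mp (le_refl |A.trace|) with _
  rcases le_or_gt 2 A.trace with h | h
  · rcases eq_or_lt_of_le h with heq | hlt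
    · exact unbounded_parabolic A hdet heq.symm h1 C
    · exact unbounded_hyperbolic A hdet hlt C
  · have hneg : A.trace ≤ -2 := by
      rcases abs_cases A.trace with ⟨he, _⟩ | ⟨he, _⟩
      · linarith
      · linarith
    rcases eq_or_lt_of_le hneg with heq | hlt
    · have : (-A).trace = 2 := by rw [htneg, heq]; ring
      obtain ⟨n, hn⟩ := unbounded_parabolic (-A) hdneg this
        (fun hc => hm1 (by rw [← neg_neg A, hc])) C
      exact ⟨n, by rwa [norm_neg_pow] at hn⟩
    · have : 2 < (-A).trace := by rw [htneg]; linarith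
      obtain ⟨n, hn⟩ := unbounded_hyperbolic (-A) hdneg this C
      exact ⟨n, by rwa [norm_neg_pow] at hn⟩

private lemma commutator_trace_gt_two (a b c d p q r t : ℝ)
    (hA : a * d - b * c = 1) (hB : p * t - q * r = 1)
    (htr : (a + d) ^ 2 < 4)
    (hcomm : !![a, b; c, d] * !![p, q; r, t] ≠ !![p, q; r, t] * !![a, b; c, d]) :
    2 < (!![a, b; c, d] * !![p, q; r, t] * (!![a, b; c, d]).adjugate *
      (!![p, q; r, t]).adjugate).trace := by
  have hell : (a - d) ^ 2 + 4 * (b * c) < 0 := by nlinarith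
  have hc : c ≠ 0 := by
    intro h
    rw [h] at hell
    nlinarith [sq_nonneg (a - d)]
  set X : ℝ := (a - d) * (p - t) * c + 2 * q * c ^ 2 - (a - d) ^ 2 * r - 2 * b * c * r with hX
  set Y : ℝ := (p - t) * c - (a - d) * r with hY
  have hT : (!![a, b; c, d] * !![p, q; r, t] * (!![a, b; c, d]).adjugate *
      (!![p, q; r, t]).adjugate).trace =
      -(d^2*q*r) + c*d*q*t - c*d*p*q + c^2*q^2 + b*d*r*t - b*d*p*r - b*c*t^2 - b*c*p^2
        + b^2*r^2 + 2*a*d*p*t - a*c*q*t + a*c*p*q - a*b*r*t + a*b*p*r - a^2*q*r := by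
    simp [Matrix.adjugate_fin_two, Matrix.mul_fin_two, Matrix.trace_fin_two]
    ring
  have hXY : ¬ (X = 0 ∧ Y = 0) := by
    rintro ⟨hX0, hY0⟩
    apply hcomm
    have he1 : b * r - c * q = 0 := by
      have h2 : (2 * c) * (b * r - c * q) = 0 := by linear_combination (a - d) * hY0 - hX0
      rcases mul_eq_zero.mp h2 with h | h
      · exact absurd h (by simpa using hc)
      · exact h
    have he2 : (a - d) * q - b * (p - t) = 0 := by
      have h2 : c * ((a - d) * q - b * (p - t)) = 0 := by
        linear_combination (-(a - d)) * he1 - b * hY0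
      rcases mul_eq_zero.mp h2 with h | h
      · exact absurd h hc
      · exact h
    ext i j
    fin_cases i <;> fin_cases j <;> simp [Matrix.mul_apply, Fin.sum_univ_two]
    · linear_combination he1
    · linear_combination he2
    · linear_combination hY0
    · linear_combination -he1
  rw [hT]
  have key : 4 * c ^ 2 * ((-(d^2*q*r) + c*d*q*t - c*d*p*q + c^2*q^2 + b*d*r*t - b*d*p*r
      - b*c*t^2 - b*c*p^2 + b^2*r^2 + 2*a*d*p*t - a*c*q*t + a*c*p*q - a*b*r*t + a*b*p*r
      - a^2*q*r) - 2) = X ^ 2 - ((a - d) ^ 2 + 4 * (b * c)) * Y ^ 2 := by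
    rw [hX, hY]
    linear_combination (8 * c ^ 2 * (p * t - q * r)) * hA + (8 * c ^ 2) * hB
  rcases not_and_or.mp hXY with h | h
  · have hX2 : 0 < X ^ 2 := by positivity
    nlinarith [sq_nonneg Y, sq_nonneg c, mul_nonneg (le_of_lt (neg_pos.mpr hell)) (sq_nonneg Y), (by positivity : (0:ℝ) < c ^ 2)]
  · have hY2 : 0 < Y ^ 2 := by positivity
    nlinarith [sq_nonneg X, (by positivity : (0:ℝ) < c ^ 2)]

private lemma rank_one_of (M : Matrix (Fin 2) (Fin 2) ℝ) (hM : M ≠ 0) (hdet : M.det = 0) :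
    M.rank = 1 := by
  have hle : M.rank ≤ 1 := by
    obtain ⟨v, hv, hMv⟩ := (Matrix.exists_mulVec_eq_zero_iff).mpr hdet
    have hker : v ∈ LinearMap.ker M.mulVecLin := by
      simpa [Matrix.mulVecLin] using hMv
    have hnt : Nontrivial (LinearMap.ker M.mulVecLin) :=
      ⟨⟨⟨v, hker⟩, 0, by simp [hv]⟩⟩
    have hpos : 0 < Module.finrank ℝ (LinearMap.ker M.mulVecLin) :=
      Module.finrank_pos_iff.mpr hnt
    have hsum := LinearMap.finrank_range_add_finrank_ker M.mulVecLin
    have hfr : Module.finrank ℝ (Fin 2 → ℝ) = 2 := by simp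
    rw [hfr] at hsum
    have : M.rank = Module.finrank ℝ (LinearMap.range M.mulVecLin) := rfl
    omega
  have hne : M.rank ≠ 0 := by
    intro h0
    apply hM
    have : Module.finrank ℝ (LinearMap.range M.mulVecLin) = 0 := h0
    have hbot : LinearMap.range M.mulVecLin = ⊥ := Submodule.finrank_eq_zero.mp this
    have hzero : M.mulVecLin = 0 := LinearMap.range_eq_bot.mp hbot
    ext i j
    have := congrFun (congrArg (fun f => f (Pi.single j 1)) (congrArg DFunLike.coe hzero)) i
    simpa [Matrix.mulVecLin, Matrix.mulVec_single] using this
  omega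

private lemma isContracting_of_unbounded (G : Subgroup SL2R)
    (h : ∀ C : ℝ, ∃ g ∈ G, C ≤ ‖((g : SL2R) : Matrix (Fin 2) (Fin 2) ℝ)‖) :
    IsContracting G := by
  have hchoice : ∀ n : ℕ, ∃ g : SL2R, g ∈ G ∧ ((n : ℝ) + 1) ≤ ‖(g : Matrix (Fin 2) (Fin 2) ℝ)‖ := by
    intro n
    obtain ⟨g, hg, hn⟩ := h ((n : ℝ) + 1)
    exact ⟨g, hg, hn⟩
  choose g hmem hnorm using hchoice
  set A : ℕ → Matrix (Fin 2) (Fin 2) ℝ :=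
    fun n => ‖((g n : SL2R) : Matrix (Fin 2) (Fin 2) ℝ)‖⁻¹ •
      ((g n : SL2R) : Matrix (Fin 2) (Fin 2) ℝ) with hA
  have hcpos : ∀ n : ℕ, (0:ℝ) < ‖((g n : SL2R) : Matrix (Fin 2) (Fin 2) ℝ)‖ := by
    intro n
    have h1 := hnorm n
    have h2 : (0:ℝ) < (n:ℝ)+1 := by positivity
    linarith
  have hAnorm : ∀ n, ‖A n‖ = 1 := by
    intro n
    rw [hA]
    simp only [norm_smul, norm_inv, norm_norm]
    exact inv_mul_cancel₀ (ne_of_gt (hcpos n))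
  have hball : ∀ n, A n ∈ Metric.closedBall (0 : Matrix (Fin 2) (Fin 2) ℝ) 1 := by
    intro n
    rw [Metric.mem_closedBall, dist_zero_right, hAnorm n]
  have hcompact : IsCompact (Metric.closedBall (0 : Matrix (Fin 2) (Fin 2) ℝ) 1) :=
    isCompact_closedBall _ _
  haveI : FirstCountableTopology (Matrix (Fin 2) (Fin 2) ℝ) :=
    inferInstanceAs (FirstCountableTopology (Fin 2 → Fin 2 → ℝ))
  obtain ⟨M, _, φ, hφ, hconv⟩ := hcompact.tendsto_subseq hball
  have hMnorm : ‖M‖ = 1 := by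
    have h1 : Tendsto (fun n => ‖A (φ n)‖) atTop (𝓝 ‖M‖) := hconv.norm
    have h2 : Tendsto (fun n => ‖A (φ n)‖) atTop (𝓝 1) := by
      simp only [hAnorm]; exact tendsto_const_nhds
    exact tendsto_nhds_unique h1 h2
  have hdet0 : M.det = 0 := by
    have hdetA : ∀ n, (A n).det = (‖((g n : SL2R) : Matrix (Fin 2) (Fin 2) ℝ)‖⁻¹) ^ 2 := by
      intro n
      rw [hA]
      simp [Matrix.det_smul]
    have h1 : Tendsto (fun n => (A (φ n)).det) atTop (𝓝 M.det) :=
      ((Continuous.matrix_det continuous_id).tendsto M).comp hconv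
    have h2 : Tendsto (fun n => (A (φ n)).det) atTop (𝓝 0) := by
      simp only [hdetA]
      have hsq : ∀ n : ℕ, (‖((g (φ n) : SL2R) : Matrix (Fin 2) (Fin 2) ℝ)‖⁻¹) ^ 2 ≤ 1/((n:ℝ)+1) := by
        intro n
        have hb : ((n : ℝ) + 1) ≤ ‖((g (φ n) : SL2R) : Matrix (Fin 2) (Fin 2) ℝ)‖ := by
          have := hnorm (φ n)
          have hmono : (n : ℝ) ≤ (φ n : ℝ) := by exact_mod_cast hφ.le_apply
          linarith
        have hp : (0:ℝ) < (n:ℝ)+1 := by positivity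
        have hinv : (‖((g (φ n) : SL2R) : Matrix (Fin 2) (Fin 2) ℝ)‖)⁻¹ ≤ ((n:ℝ)+1)⁻¹ :=
          inv_anti₀ hp hb
        have hinvpos : (0:ℝ) ≤ (‖((g (φ n) : SL2R) : Matrix (Fin 2) (Fin 2) ℝ)‖)⁻¹ := by positivity
        calc (‖((g (φ n) : SL2R) : Matrix (Fin 2) (Fin 2) ℝ)‖⁻¹) ^ 2
            ≤ ((n:ℝ)+1)⁻¹ ^ 2 := by nlinarith
          _ ≤ ((n:ℝ)+1)⁻¹ := by
              rw [pow_two]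
              nlinarith [inv_le_one_of_one_le₀ (by linarith : (1:ℝ) ≤ (n:ℝ)+1),
                (by positivity : (0:ℝ) ≤ ((n:ℝ)+1)⁻¹)]
          _ = 1/((n:ℝ)+1) := (one_div _).symm
      apply squeeze_zero (fun n => by positivity) hsq
      exact tendsto_one_div_add_atTop_nhds_zero_nat
    exact tendsto_nhds_unique h1 h2
  have hM0 : M ≠ 0 := by
    intro h0
    rw [h0, norm_zero] at hMnorm
    norm_num at hMnorm
  exact ⟨fun n => g (φ n), fun n => hmem (φ n), M, rank_one_of M hM0 hdet0, hconv⟩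

/-- Every nonabelian subgroup of `SL(2,ℝ)` is contracting. -/
theorem isContracting_of_nonabelian (G : Subgroup SL2R)
    (hG : ∃ a ∈ G, ∃ b ∈ G, a * b ≠ b * a) :
    IsContracting G := by
  obtain ⟨a, ha, b, hb, hab⟩ := hG
  apply isContracting_of_unbounded
  set A : Matrix (Fin 2) (Fin 2) ℝ := ((a : SL2R) : Matrix (Fin 2) (Fin 2) ℝ) with hAdef
  set B : Matrix (Fin 2) (Fin 2) ℝ := ((b : SL2R) : Matrix (Fin 2) (Fin 2) ℝ) with hBdef
  have hABne : A * B ≠ B * A := by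
    intro h
    apply hab
    exact Subtype.coe_injective h
  have hdetA : A.det = 1 := a.property
  intro C
  by_cases htr : A.trace ^ 2 < 4
  · set k := a * b * a⁻¹ * b⁻¹ with hk
    have hkG : k ∈ G := mul_mem (mul_mem (mul_mem ha hb) (inv_mem ha)) (inv_mem hb)
    have hkcoe : ((k : SL2R) : Matrix (Fin 2) (Fin 2) ℝ) = A * B * A.adjugate * B.adjugate := by
      rfl
    have htrk : 2 < ((k : SL2R) : Matrix (Fin 2) (Fin 2) ℝ).trace := by
      rw [hkcoe]
      have ea := Matrix.eta_fin_two A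
      have eb := Matrix.eta_fin_two B
      rw [ea, eb]
      apply commutator_trace_gt_two
      · rw [← Matrix.det_fin_two]; exact hdetA
      · rw [← Matrix.det_fin_two]; exact b.property
      · rw [Matrix.trace_fin_two] at htr; exact htr
      · rw [← ea, ← eb]; exact hABne
    have habs : 2 ≤ |((k : SL2R) : Matrix (Fin 2) (Fin 2) ℝ).trace| :=
      le_trans (le_of_lt htrk) (le_abs_self _)
    have h1 : ((k : SL2R) : Matrix (Fin 2) (Fin 2) ℝ) ≠ 1 := by
      intro h
      rw [h] at htrk
      norm_num [Matrix.trace_one] at htrk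
    have hm1 : ((k : SL2R) : Matrix (Fin 2) (Fin 2) ℝ) ≠ -1 := by
      intro h
      rw [h] at htrk
      norm_num [Matrix.trace_neg, Matrix.trace_one] at htrk
    obtain ⟨n, hn⟩ := unbounded_of_big_trace _ k.property habs h1 hm1 C
    exact ⟨k ^ n, pow_mem hkG n, by convert hn using 2; exact Matrix.SpecialLinearGroup.coe_pow (A := k) n⟩
  · have habs : 2 ≤ |A.trace| := by
      nlinarith [sq_abs A.trace, abs_nonneg A.trace]
    have h1 : A ≠ 1 := by
      intro h
      have haa : a = 1 := Subtype.coe_injective (h.trans rfl)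
      exact hab (by rw [haa, one_mul, mul_one])
    have hm1 : A ≠ -1 := by
      intro h
      apply hABne
      rw [h, neg_one_mul, mul_neg_one]
    obtain ⟨n, hn⟩ := unbounded_of_big_trace A hdetA habs h1 hm1 C
    exact ⟨a ^ n, pow_mem ha n, by convert hn using 2; exact Matrix.SpecialLinearGroup.coe_pow (A := a) n⟩
end

section
/- Let A : ℂ → SL(2,ℂ) be real-analytic (its matrix entries are entire analytic functions taking real values on ℝ) with z ↦ tr A(z) nonconstant, and suppose tr A(z) ∈ [−2,2] implies z ∈ ℝ. Then for any countable set D₀ ⊆ ℂ there exists w ∈ ℝ \ D₀ such that A(w) has real entries and tr A(w) ∈ (−2,2), i.e., A(w) is an elliptic element of SL(2,ℝ). -/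
open Matrix Filter Topology

attribute [local instance] Matrix.normedAddCommGroup

/-- If `A : ℂ → SL(2,ℂ)` is real-analytic with nonconstant trace and its
trace lies in `[-2,2]` only at real points, then for any countable `D₀ ⊆ ℂ` there is a real
`w ∉ D₀` at which `A(w)` has real entries and is elliptic. -/
theorem exists_real_elliptic_point (A : ℂ → Matrix.SpecialLinearGroup (Fin 2) ℂ)
    (hAanal : ∀ i j, Differentiable ℂ fun z => ((A z : Matrix (Fin 2) (Fin 2) ℂ) i j))
    (hAreal : ∀ (x : ℝ) (i j), ((A x : Matrix (Fin 2) (Fin 2) ℂ) i j).im = 0)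
    (hAtr : ¬ ∃ c : ℂ, ∀ z, Matrix.trace ((A z : Matrix (Fin 2) (Fin 2) ℂ)) = c)
    (hAell : ∀ z : ℂ, (Matrix.trace ((A z : Matrix (Fin 2) (Fin 2) ℂ))).im = 0 →
      (Matrix.trace ((A z : Matrix (Fin 2) (Fin 2) ℂ))).re ∈ Set.Icc (-2 : ℝ) 2 → z.im = 0)
    (D₀ : Set ℂ) (hD₀ : D₀.Countable) :
    ∃ w : ℝ, (w : ℂ) ∉ D₀ ∧
      (∀ i j, ((A w : Matrix (Fin 2) (Fin 2) ℂ) i j).im = 0) ∧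
      (Matrix.trace ((A w : Matrix (Fin 2) (Fin 2) ℂ))).im = 0 ∧
      (Matrix.trace ((A w : Matrix (Fin 2) (Fin 2) ℂ))).re ∈ Set.Ioo (-2 : ℝ) 2 := by
  set f : ℂ → ℂ := fun z => Matrix.trace ((A z : Matrix (Fin 2) (Fin 2) ℂ)) with hfdef
  have hfe : ∀ z, f z = (A z : Matrix (Fin 2) (Fin 2) ℂ) 0 0 +
      (A z : Matrix (Fin 2) (Fin 2) ℂ) 1 1 := by
    intro z; rw [hfdef]; exact Matrix.trace_fin_two _
  have hfd : Differentiable ℂ f := by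
    have : f = fun z => (A z : Matrix (Fin 2) (Fin 2) ℂ) 0 0 +
        (A z : Matrix (Fin 2) (Fin 2) ℂ) 1 1 := funext hfe
    rw [this]; exact (hAanal 0 0).add (hAanal 1 1)
  have hfim : ∀ x : ℝ, (f x).im = 0 := by
    intro x; rw [hfe, Complex.add_im, hAreal x 0 0, hAreal x 1 1, add_zero]
  -- the set of good real points
  set S : Set ℝ := {x : ℝ | (f x).re ∈ Set.Ioo (-2 : ℝ) 2} with hSdef
  have hSopen : IsOpen S := by
    have : Continuous fun x : ℝ => (f x).re :=
      Complex.continuous_re.comp (hfd.continuous.comp Complex.continuous_ofReal)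
    exact isOpen_Ioo.preimage this
  have hSne : S.Nonempty := by
    by_contra hS
    rw [Set.not_nonempty_iff_eq_empty] at hS
    have hSe : ∀ x : ℝ, (f x).re ∉ Set.Ioo (-2 : ℝ) 2 := by
      intro x hx
      exact absurd (hS ▸ hx : x ∈ (∅ : Set ℝ)) (Set.notMem_empty x)
    -- Step 1 : f omits the whole segment [-2,2]
    have hseg : ∀ z : ℂ, ¬((f z).im = 0 ∧ (f z).re ∈ Set.Icc (-2 : ℝ) 2) := by
      rintro z ⟨h1, h2⟩
      have hzim : z.im = 0 := hAell z h1 h2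
      have hzr : z = (z.re : ℂ) := Complex.ext (by simp) (by simp [hzim])
      have h2' : |(f z).re| = 2 := by
        have := hSe z.re
        rw [← hzr] at this
        rcases h2 with ⟨ha, hb⟩
        rw [Set.mem_Ioo] at this
        push_neg at this
        rcases lt_or_ge (-2 : ℝ) ((f z).re) with h | h
        · have := this h; rw [abs_of_nonneg (by linarith)]; linarith
        · rw [abs_of_nonpos (by linarith)]; linarith
      have hfz : f z = ((f z).re : ℂ) := Complex.ext (by simp) (by simp [h1])
      rcases (hfd.analyticAt z).eventually_constant_or_nhds_le_map_nhds with hconst | hmap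
      · -- f would be globally constant
        have heq : Set.EqOn f (fun _ => f z) Set.univ :=
          AnalyticOnNhd.eqOn_of_preconnected_of_eventuallyEq
            (fun w _ => hfd.analyticAt w) (fun w _ => analyticAt_const)
            isPreconnected_univ (Set.mem_univ z) hconst
        exact hAtr ⟨f z, fun w => heq (Set.mem_univ w)⟩
      · have hr : Set.range f ∈ 𝓝 (f z) := by
          apply hmap
          rw [mem_map]
          have : f ⁻¹' Set.range f = Set.univ := by
            ext w; simp [Set.mem_range]
          rw [this]; exact Filter.univ_mem
        obtain ⟨ε, hε, hball⟩ := Metric.mem_nhds_iff.1 hr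
        set δ : ℝ := min ε 1 with hδdef
        have hδ0 : 0 < δ := lt_min hε one_pos
        have hδ1 : δ ≤ 1 := min_le_right _ _
        have hδε : δ ≤ ε := min_le_left _ _
        set c : ℝ := (f z).re * (1 - δ / 4) with hcdef
        have hcball : (c : ℂ) ∈ Metric.ball (f z) ε := by
          rw [Metric.mem_ball, hfz, Complex.dist_eq, ← Complex.ofReal_sub,
            Complex.norm_real, Real.norm_eq_abs]
          have : c - (f z).re = -((f z).re * (δ / 4)) := by rw [hcdef]; ring
          rw [this, abs_neg, abs_mul, h2', abs_of_nonneg (by linarith)]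
          linarith
        obtain ⟨z₁, hz₁⟩ := hball hcball
        have h1' : (f z₁).im = 0 := by rw [hz₁]; simp
        have h2'' : (f z₁).re ∈ Set.Ioo (-2 : ℝ) 2 := by
          rw [hz₁, Complex.ofReal_re, hcdef]
          rcases abs_eq (by norm_num : (0:ℝ) ≤ 2) |>.1 h2' with h | h <;> rw [h] <;>
            constructor <;> nlinarith
        have hz₁im : z₁.im = 0 := hAell z₁ h1' ⟨le_of_lt h2''.1, le_of_lt h2''.2⟩
        have hz₁r : (z₁.re : ℂ) = z₁ := (Complex.ext (by simp) (by simp [hz₁im])).symm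
        exact hSe z₁.re (by rw [hz₁r]; exact h2'')
    -- Step 2 : Joukowski/Möbius + Liouville show f is constant, contradiction
    have hne : ∀ z, f z + 2 ≠ 0 := by
      intro z h
      have hfz : f z = -2 := by linear_combination h
      exact hseg z ⟨by rw [hfz]; norm_num, by rw [hfz]; norm_num⟩
    set q : ℂ → ℂ := fun z => (f z - 2) / (f z + 2) with hqdef
    have hqd : Differentiable ℂ q := (hfd.sub_const 2).div (hfd.add_const 2) hne
    have hq_eq : ∀ z, q z * (f z + 2) = f z - 2 := by
      intro z; rw [hqdef]; exact div_mul_cancel₀ _ (hne z)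
    have hq_slit : ∀ z, q z ∈ Complex.slitPlane := by
      intro z
      rw [Complex.mem_slitPlane_iff]
      by_contra hcon
      push_neg at hcon
      obtain ⟨hre, him⟩ := hcon
      set t : ℝ := (q z).re with htdef
      have hqz : q z = (t : ℂ) := Complex.ext (by simp [htdef]) (by simp [him])
      have h1t : ((1 : ℝ) - t) ≠ 0 := by
        intro h; have : t = 1 := by linarith
        rw [this] at hre; norm_num at hre
      have hfz : f z = (((2 + 2 * t) / (1 - t) : ℝ) : ℂ) := by
        have h := hq_eq z
        rw [hqz] at h
        have h1t' : ((1 : ℂ) - (t : ℂ)) ≠ 0 := by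
          intro hh
          apply h1t
          have := congrArg Complex.re hh
          simpa using this
        push_cast
        rw [eq_div_iff h1t']
        linear_combination -h
      apply hseg z
      constructor
      · rw [hfz]; exact Complex.ofReal_im _
      · rw [hfz, Complex.ofReal_re]
        constructor
        · rw [le_div_iff₀ (by linarith)]; linarith
        · rw [div_le_iff₀ (by linarith)]; linarith
    -- square root of q with positive real part
    set s : ℂ → ℂ := fun z => Complex.exp (((2:ℝ)⁻¹ : ℝ) * Complex.log (q z)) with hsdef
    have hsd : Differentiable ℂ s := by
      intro z
      exact (((Complex.differentiableAt_log (hq_slit z)).comp z (hqd z)).const_mul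
        _).cexp
    have hs_re : ∀ z, 0 < (s z).re := by
      intro z
      rw [hsdef]
      simp only [Complex.exp_re, Complex.im_ofReal_mul, Complex.log_im]
      apply mul_pos (Real.exp_pos _)
      apply Real.cos_pos_of_mem_Ioo
      have harg := Complex.arg_mem_Ioc (q z)
      have hne_pi : (q z).arg ≠ Real.pi := Complex.slitPlane_arg_ne_pi (hq_slit z)
      have hlt : (q z).arg < Real.pi := lt_of_le_of_ne harg.2 hne_pi
      have hgt : -Real.pi < (q z).arg := harg.1
      rw [Set.mem_Ioo]
      constructor <;> nlinarith [Real.pi_pos]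
    -- ψ maps to the unit disc
    have hs1 : ∀ z, s z + 1 ≠ 0 := by
      intro z h
      have : (s z).re + 1 = 0 := by
        have := congrArg Complex.re h
        simpa using this
      linarith [hs_re z]
    set ψ : ℂ → ℂ := fun z => (s z - 1) / (s z + 1) with hψdef
    have hψd : Differentiable ℂ ψ := (hsd.sub_const 1).div (hsd.add_const 1) hs1
    have hψb : ∀ z, ‖ψ z‖ < 1 := by
      intro z
      rw [hψdef]
      simp only
      rw [norm_div, div_lt_one (norm_pos_iff.2 (hs1 z))]
      have h2 : ‖s z - 1‖ ^ 2 < ‖s z + 1‖ ^ 2 := by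
        rw [Complex.sq_norm, Complex.sq_norm,
          Complex.normSq_apply, Complex.normSq_apply]
        simp only [Complex.sub_re, Complex.sub_im, Complex.add_re, Complex.add_im,
          Complex.one_re, Complex.one_im]
        nlinarith [hs_re z]
      nlinarith [norm_nonneg (s z - 1), norm_nonneg (s z + 1)]
    have hψc : ∀ z, ψ z = ψ 0 := by
      have hb : Bornology.IsBounded (Set.range ψ) := by
        apply Bornology.IsBounded.subset (Metric.isBounded_ball (x := (0:ℂ)) (r := 1))
        rintro _ ⟨z, rfl⟩
        rw [Metric.mem_ball, dist_zero_right]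
        exact hψb z
      exact fun z => Differentiable.apply_eq_apply_of_bounded hψd hb z 0
    have hsc : ∀ z, s z = s 0 := by
      intro z
      have h := hψc z
      rw [hψdef] at h
      simp only at h
      have h2 := (div_eq_div_iff (hs1 z) (hs1 0)).1 h
      linear_combination h2 / 2
    have hqc : ∀ z, q z = q 0 := by
      have hsq : ∀ z, s z ^ 2 = q z := by
        intro z
        rw [hsdef]
        simp only
        rw [← Complex.exp_nat_mul]
        have : ((2 : ℕ) : ℂ) * (((2:ℝ)⁻¹ : ℝ) * Complex.log (q z)) = Complex.log (q z) := by
          push_cast; ring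
        rw [this, Complex.exp_log (Complex.slitPlane_ne_zero (hq_slit z))]
      intro z
      rw [← hsq z, ← hsq 0, hsc z]
    have hq1 : ∀ z, q z ≠ 1 := by
      intro z h
      have := hq_eq z
      rw [h, one_mul] at this
      have : (2 : ℂ) = -2 := by linear_combination this
      norm_num at this
    have hfc : ∀ z, f z = f 0 := by
      intro z
      have hz := hq_eq z
      have h0 := hq_eq 0
      rw [hqc z] at hz
      -- f z * (1 - q 0) = 2 + 2 * q 0 = f 0 * (1 - q 0)
      have h1 : f z * (1 - q 0) = 2 + 2 * q 0 := by linear_combination -hz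
      have h2 : f 0 * (1 - q 0) = 2 + 2 * q 0 := by linear_combination -h0
      have hq0 : (1 : ℂ) - q 0 ≠ 0 := by
        intro h; apply hq1 0; linear_combination -h
      field_simp at h1 h2
      rw [mul_comm] at h1 h2
      exact mul_left_cancel₀ hq0 (by linear_combination h1 - h2)
    exact hAtr ⟨f 0, hfc⟩
  -- conclusion: S is open, nonempty, hence of positive measure; avoid countable D₀
  have hD₀' : ((fun x : ℝ => (x : ℂ)) ⁻¹' D₀).Countable :=
    hD₀.preimage Complex.ofReal_injective
  have hdiff : (S \ ((fun x : ℝ => (x : ℂ)) ⁻¹' D₀)).Nonempty := by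
    by_contra h
    rw [Set.not_nonempty_iff_eq_empty, Set.diff_eq_empty] at h
    have h1 : MeasureTheory.volume S = 0 :=
      le_antisymm (le_trans (MeasureTheory.measure_mono h)
        (le_of_eq (hD₀'.measure_zero _))) (zero_le)
    exact (hSopen.measure_pos MeasureTheory.volume hSne).ne' h1
  obtain ⟨w, hwS, hwD⟩ := hdiff
  exact ⟨w, hwD, hAreal w, hfim w, hwS⟩
end
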